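/- Let n and k be positive integers with k divides n and i an integer with 1 ≤ i ≤ k−1. Then k / gcd(k, i) divides C(n, i). -/

import Mathlib

lemma n_gcd_quotient_dvd_choose (n i : ℕ) (hn : 0 < n) (hi : 1 ≤ i) :
    (n / Nat.gcd n i) ∣ Nat.choose n i := by
  have hg : 0 < Nat.gcd n i := Nat.gcd_pos_of_pos_right _ hi
  have key : n * Nat.choose (n - 1) (i - 1) = i * Nat.choose n i := by
    have h := Nat.add_one_mul_choose_eq (n - 1) (i - 1)
    have e1 : n - 1 + 1 = n := by omega
    have e2 : i - 1 + 1 = i := by omega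
    rw [e1, e2] at h
    rw [h, mul_comm]
  have hdn : Nat.gcd n i ∣ n := Nat.gcd_dvd_left _ _
  have hdi : Nat.gcd n i ∣ i := Nat.gcd_dvd_right _ _
  have key2 : (n / Nat.gcd n i) * Nat.choose (n - 1) (i - 1)
      = (i / Nat.gcd n i) * Nat.choose n i := by
    apply Nat.eq_of_mul_eq_mul_left hg
    rw [← mul_assoc, ← mul_assoc, Nat.mul_div_cancel' hdn, Nat.mul_div_cancel' hdi]
    exact key
  have hcop : Nat.Coprime (n / Nat.gcd n i) (i / Nat.gcd n i) :=
    Nat.coprime_div_gcd_div_gcd hg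
  exact hcop.dvd_of_dvd_mul_left ⟨_, key2.symm⟩

theorem k_gcd_quotient_dvd_choose (n k i : ℕ) (hn : 0 < n) (hk : 0 < k)
    (hdvd : k ∣ n) (hi : 1 ≤ i) (hik : i ≤ k - 1) :
    (k / Nat.gcd k i) ∣ Nat.choose n i := by
  have hmain := n_gcd_quotient_dvd_choose n i hn hi
  refine dvd_trans ?_ hmain
  have hg : 0 < Nat.gcd k i := Nat.gcd_pos_of_pos_right _ hi
  have hG : 0 < Nat.gcd n i := Nat.gcd_pos_of_pos_right _ hi
  have h1 : k * Nat.gcd n i ∣ n * Nat.gcd k i := by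
    rw [← Nat.gcd_mul_left, ← Nat.gcd_mul_left]
    refine Nat.dvd_gcd ((Nat.gcd_dvd_left _ _).trans ⟨1, by ring⟩)
      ((Nat.gcd_dvd_right _ _).trans ?_)
    rw [mul_comm k i, mul_comm n i]
    exact mul_dvd_mul_left i hdvd
  obtain ⟨c, hc⟩ := h1
  refine ⟨c, ?_⟩
  have hk' : Nat.gcd k i * (k / Nat.gcd k i) = k := Nat.mul_div_cancel' (Nat.gcd_dvd_left _ _)
  have hn' : Nat.gcd n i * (n / Nat.gcd n i) = n := Nat.mul_div_cancel' (Nat.gcd_dvd_left _ _)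
  apply Nat.eq_of_mul_eq_mul_left (Nat.mul_pos hg hG)
  calc Nat.gcd k i * Nat.gcd n i * (n / Nat.gcd n i)
      = Nat.gcd k i * n := by rw [mul_assoc, hn']
    _ = n * Nat.gcd k i := mul_comm _ _
    _ = k * Nat.gcd n i * c := hc
    _ = Nat.gcd k i * Nat.gcd n i * (k / Nat.gcd k i * c) := by
        conv_lhs => rw [← hk']
        ring
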